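/- For every natural number n ≥ 1, P_n(x) = ∑_{k=0}^{n} binom(n−1, n−k) · b^{n−k} · Q_k(x) in ℝ[x] (the term k = 0 vanishes since binom(n−1,n) = 0). -/
import Mathlib

open Polynomial Finset

noncomputable def Asum (b : ℝ) (Q : ℕ → Polynomial ℝ) (m : ℕ) : Polynomial ℝ :=
  ∑ j ∈ range (m+1), C ((m.choose j : ℝ) * b ^ j) * Q (m+1-j)

noncomputable def Bsum (b : ℝ) (Q : ℕ → Polynomial ℝ) (m : ℕ) : Polynomial ℝ :=
  ∑ j ∈ range (m+1), C ((m.choose j : ℝ) * b ^ j) * Q (m+2-j)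

noncomputable def Dsum (b : ℝ) (Q : ℕ → Polynomial ℝ) (m : ℕ) : Polynomial ℝ :=
  ∑ j ∈ range (m+1), C ((m.choose j : ℝ) * b ^ j) * Q (m-j)

lemma L1 (b : ℝ) (Q : ℕ → Polynomial ℝ) (m : ℕ) :
    Asum b Q (m+1) = Bsum b Q m + C b * Asum b Q m := by
  unfold Asum Bsum
  rw [Finset.sum_range_succ' (fun j => C (((m+1).choose j : ℝ) * b ^ j) * Q (m+1+1-j)) (m+1)]
  have step1 : ∑ i ∈ range (m+1), C (((m+1).choose (i+1) : ℝ) * b ^ (i+1)) * Q (m+1+1-(i+1))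
      = ∑ i ∈ range (m+1), (C b * (C ((m.choose i : ℝ) * b ^ i) * Q (m+1-i))
          + C ((m.choose (i+1) : ℝ) * b ^ (i+1)) * Q (m+1-i)) := by
    apply Finset.sum_congr rfl
    intro i hi
    rw [show m+1+1-(i+1) = m+1-i by omega, Nat.choose_succ_succ]
    push_cast
    simp only [add_mul, map_add, map_mul, map_pow, pow_succ]
    ring
  rw [step1, Finset.sum_add_distrib, ← Finset.mul_sum]
  have step2 : ∑ i ∈ range (m+1), C ((m.choose (i+1) : ℝ) * b ^ (i+1)) * Q (m+1-i)
      = ∑ i ∈ range m, C ((m.choose (i+1) : ℝ) * b ^ (i+1)) * Q (m+2-(i+1)) := by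
    rw [Finset.sum_range_succ]
    simp [Nat.choose_succ_self]
  rw [step2,
    Finset.sum_range_succ' (fun j => C ((m.choose j : ℝ) * b ^ j) * Q (m+2-j)) m]
  simp only [Nat.add_sub_cancel, Nat.choose_zero_right, Nat.cast_one, pow_zero, one_mul,
    Nat.sub_zero]
  ring

lemma L2 (b : ℝ) (Q : ℕ → Polynomial ℝ) (m : ℕ) :
    Dsum b Q (m+1) = Asum b Q m + C b * Dsum b Q m := by
  unfold Asum Dsum
  rw [Finset.sum_range_succ' (fun j => C (((m+1).choose j : ℝ) * b ^ j) * Q (m+1-j)) (m+1)]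
  have step1 : ∑ i ∈ range (m+1), C (((m+1).choose (i+1) : ℝ) * b ^ (i+1)) * Q (m+1-(i+1))
      = ∑ i ∈ range (m+1), (C b * (C ((m.choose i : ℝ) * b ^ i) * Q (m-i))
          + C ((m.choose (i+1) : ℝ) * b ^ (i+1)) * Q (m-i)) := by
    apply Finset.sum_congr rfl
    intro i hi
    rw [show m+1-(i+1) = m-i by omega, Nat.choose_succ_succ]
    push_cast
    simp only [add_mul, map_add, map_mul, map_pow, pow_succ]
    ring
  rw [step1, Finset.sum_add_distrib, ← Finset.mul_sum]
  have step2 : ∑ i ∈ range (m+1), C ((m.choose (i+1) : ℝ) * b ^ (i+1)) * Q (m-i)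
      = ∑ i ∈ range m, C ((m.choose (i+1) : ℝ) * b ^ (i+1)) * Q (m+1-(i+1)) := by
    rw [Finset.sum_range_succ]
    simp [Nat.choose_succ_self]
  rw [step2,
    Finset.sum_range_succ' (fun j => C ((m.choose j : ℝ) * b ^ j) * Q (m+1-j)) m]
  simp only [Nat.choose_zero_right, Nat.cast_one, pow_zero, one_mul, Nat.sub_zero]
  ring

lemma L3 (b c : ℝ) (Q : ℕ → Polynomial ℝ)
    (hQ0 : Q 0 = 1) (hQ1 : Q 1 = X - C c)
    (hQ2 : Q 2 = X ^ 2 - C (2 * (b + c)) * X + C (c * (b + c)))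
    (hQ : ∀ n, 3 ≤ n →
      Q n = (X - C (2 * b + c)) * Q (n - 1) - C (b * (b + c)) * Q (n - 2))
    (m : ℕ) :
    X * Asum b Q m + C b ^ (m+2)
      = Bsum b Q m + (2 * C b + C c) * Asum b Q m
        + C b * (C b + C c) * Dsum b Q m := by
  have qk : ∀ j ∈ range (m+1),
      X * (C ((m.choose j : ℝ) * b ^ j) * Q (m+1-j))
        = C ((m.choose j : ℝ) * b ^ j) * Q (m+2-j)
          + (2 * C b + C c) * (C ((m.choose j : ℝ) * b ^ j) * Q (m+1-j))
          + C b * (C b + C c) * (C ((m.choose j : ℝ) * b ^ j) * Q (m-j))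
          - (if j = m then C b ^ (m+2) else 0) := by
    intro j hj
    have hj' : j ≤ m := by simpa [Nat.lt_succ_iff] using hj
    rcases eq_or_lt_of_le hj' with h | h
    · subst h
      rw [if_pos rfl, show j+1-j = 1 by omega, show j+2-j = 2 by omega,
        show j-j = 0 by omega, hQ0, hQ1, hQ2, Nat.choose_self]
      simp only [Nat.cast_one, one_mul, map_pow, map_mul, map_add, map_ofNat]
      ring
    · rw [if_neg (by omega), sub_zero]
      have e := hQ (m+2-j) (by omega)
      rw [show m+2-j-1 = m+1-j by omega, show m+2-j-2 = m-j by omega] at e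
      rw [e]
      simp only [map_mul, map_add, map_ofNat]
      ring
  have main : X * Asum b Q m
      = Bsum b Q m + (2 * C b + C c) * Asum b Q m
        + C b * (C b + C c) * Dsum b Q m - C b ^ (m+2) := by
    unfold Asum Bsum Dsum
    rw [Finset.mul_sum, Finset.sum_congr rfl qk, Finset.sum_sub_distrib,
      Finset.sum_add_distrib, Finset.sum_add_distrib, ← Finset.mul_sum, ← Finset.mul_sum]
    congr 1
    simp
  rw [main]; ring

lemma L4 (b c : ℝ) (Q : ℕ → Polynomial ℝ)
    (hQ0 : Q 0 = 1) (hQ1 : Q 1 = X - C c)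
    (hQ2 : Q 2 = X ^ 2 - C (2 * (b + c)) * X + C (c * (b + c)))
    (hQ : ∀ n, 3 ≤ n →
      Q n = (X - C (2 * b + c)) * Q (n - 1) - C (b * (b + c)) * Q (n - 2))
    (m : ℕ) :
    (X - C c) * Asum b Q (m+1) - C b * X * Asum b Q m = Asum b Q (m+2) := by
  have h1 := L1 b Q (m+1)
  have h1' := L1 b Q m
  have h2 := L2 b Q m
  have h3 := L3 b c Q hQ0 hQ1 hQ2 hQ (m+1)
  have h3' := L3 b c Q hQ0 hQ1 hQ2 hQ m
  linear_combination (-1 : Polynomial ℝ) * h1 + h3 + (C b * (C b + C c)) * h2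
    - C b * h3' + C b * h1'

lemma reflectA (b : ℝ) (Q : ℕ → Polynomial ℝ) (m : ℕ) :
    ∑ k ∈ range (m+1+1), C ((m.choose (m+1-k) : ℝ) * b ^ (m+1-k)) * Q k
      = Asum b Q m := by
  rw [← Finset.sum_range_reflect (fun k => C ((m.choose (m+1-k) : ℝ) * b ^ (m+1-k)) * Q k) (m+1+1)]
  unfold Asum
  rw [Finset.sum_range_succ]
  have top : C ((m.choose (m+1-(m+1+1-1-(m+1))) : ℝ) * b ^ (m+1-(m+1+1-1-(m+1))))
      * Q (m+1+1-1-(m+1)) = 0 := by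
    rw [show m+1+1-1-(m+1) = 0 by omega, show m+1-0 = m+1 by omega, Nat.choose_succ_self]
    simp
  rw [top, add_zero]
  apply Finset.sum_congr rfl
  intro j hj
  have hj' : j ≤ m := by simpa [Nat.lt_succ_iff] using hj
  rw [show m+1+1-1-j = m+1-j by omega, show m+1-(m+1-j) = j by omega]

/-- For `n ≥ 1`, `P_n(x) = ∑_{k=0}^n C(n-1, n-k) b^{n-k} Q_k(x)`. -/
theorem lbp_in_terms_of_orth
    (b c : ℝ) (hb : b ≠ 0) (hc : c ≠ 0)
    (P : ℕ → Polynomial ℝ)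
    (hP0 : P 0 = 1)
    (hP1 : P 1 = Polynomial.X - Polynomial.C c)
    (hP : ∀ n, 2 ≤ n →
      P n = (Polynomial.X - Polynomial.C c) * P (n - 1)
            - Polynomial.C b * Polynomial.X * P (n - 2))
    (Q : ℕ → Polynomial ℝ)
    (hQ0 : Q 0 = 1)
    (hQ1 : Q 1 = Polynomial.X - Polynomial.C c)
    (hQ2 : Q 2 = Polynomial.X ^ 2 - Polynomial.C (2 * (b + c)) * Polynomial.X
                   + Polynomial.C (c * (b + c)))
    (hQ : ∀ n, 3 ≤ n →
      Q n = (Polynomial.X - Polynomial.C (2 * b + c)) * Q (n - 1)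
            - Polynomial.C (b * (b + c)) * Q (n - 2)) :
    ∀ n, 1 ≤ n →
      P n = ∑ k ∈ Finset.range (n + 1),
        Polynomial.C (((n - 1).choose (n - k) : ℝ) * b ^ (n - k)) * Q k := by
  have base1 : P 1 = Asum b Q 0 := by
    unfold Asum
    simp [hP1, hQ1]
  have base2 : P 2 = Asum b Q 1 := by
    have h := hP 2 (by norm_num)
    norm_num at h
    unfold Asum
    rw [Finset.sum_range_succ, Finset.sum_range_succ, Finset.sum_range_zero, h, hP0, hP1]
    norm_num
    rw [hQ1, hQ2]
    simp only [map_mul, map_add, map_ofNat, map_pow, map_one]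
    ring
  have main : ∀ m, P (m+1) = Asum b Q m ∧ P (m+2) = Asum b Q (m+1) := by
    intro m
    induction m with
    | zero => exact ⟨base1, base2⟩
    | succ k ih =>
      refine ⟨ih.2, ?_⟩
      have h := hP (k+3) (by omega)
      rw [show k+3-1 = k+2 by omega, show k+3-2 = k+1 by omega] at h
      rw [show k+1+2 = k+3 by omega] at *
      rw [h, ih.1, ih.2]
      exact L4 b c Q hQ0 hQ1 hQ2 hQ k
  intro n hn
  obtain ⟨m, rfl⟩ : ∃ m, n = m + 1 := ⟨n - 1, by omega⟩
  rw [(main m).1]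
  simp only [Nat.add_sub_cancel]
  exact (reflectA b Q m).symm
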